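/- Let H be a real Hilbert space, T : H → H a monotone operator satisfying ‖T u − T v‖² ≥ α‖u − v‖² for some α > 0 and all u, v ∈ H, let ε > 0, and let z̄ ∈ H satisfy T z̄ = 0. If z ∈ H satisfies T z + ε z = 0, then (α + ε²)‖z − z̄‖² ≤ ε²‖z̄‖². -/

import Mathlib

theorem stmt4 {H : Type*} [NormedAddCommGroup H] [InnerProductSpace ℝ H]
    (T : H → H) (α ε : ℝ) (hα : 0 < α) (hε : 0 < ε)
    (hmono : ∀ u v : H, 0 ≤ (inner ℝ (T u - T v) (u - v) : ℝ))
    (herr : ∀ u v : H, α * ‖u - v‖ ^ 2 ≤ ‖T u - T v‖ ^ 2)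
    (zbar : H) (hzbar : T zbar = 0)
    (z : H) (hz : T z + ε • z = 0) :
    (α + ε ^ 2) * ‖z - zbar‖ ^ 2 ≤ ε ^ 2 * ‖zbar‖ ^ 2 := by
  have hTz : T z = -(ε • z) := by linear_combination (norm := abel_nf) hz
  -- monotonicity gives ⟨z, z - zbar⟩ ≤ 0
  have hm := hmono z zbar
  rw [hzbar, sub_zero, hTz] at hm
  have hip : (inner ℝ z (z - zbar) : ℝ) ≤ 0 := by
    have : (inner ℝ (-(ε • z)) (z - zbar) : ℝ) = -(ε * inner ℝ z (z - zbar)) := by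
      rw [inner_neg_left, real_inner_smul_left]
    rw [this] at hm
    nlinarith
  -- error bound gives α‖z-zbar‖² ≤ ε²‖z‖²
  have herr' := herr z zbar
  rw [hzbar, sub_zero, hTz] at herr'
  have hnorm : ‖-(ε • z)‖ ^ 2 = ε ^ 2 * ‖z‖ ^ 2 := by
    rw [norm_neg, norm_smul, mul_pow, Real.norm_eq_abs, sq_abs]
  rw [hnorm] at herr'
  -- ‖zbar‖² = ‖z‖² - 2⟨z, z-zbar⟩ + ‖z-zbar‖²
  have hexp : ‖zbar‖ ^ 2 = ‖z‖ ^ 2 - 2 * inner ℝ z (z - zbar) + ‖z - zbar‖ ^ 2 := by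
    have := @norm_sub_sq_real H _ _ z (z - zbar)
    simpa using this
  nlinarith [sq_nonneg ε, sq_nonneg (‖z - zbar‖)]
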